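/- Let β ∈ (0,1] and let (a_n)_{n≥1} be a strictly increasing bounded sequence of real numbers such that Σ_{n≥1} (a_{n+1} − a_n)^β = +∞. Define h : ℝ → [0,∞] by h(y) = β (y − a_n)^{β−1} if y ∈ (a_n, (a_n + a_{n+1})/2) for some n, h(y) = β (a_{n+1} − y)^{β−1} if y ∈ ((a_n + a_{n+1})/2, a_{n+1}) for some n, and h(y) = 0 otherwise. Then for every τ > 0 and every θ ∈ ℝ, ∫_ℝ h(y) Γ(τ, y − θ) dy = +∞. -/

import Mathlib

open MeasureTheory
open scoped ENNReal

noncomputable section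

/-- The one-dimensional Gaussian density `Γ(t,x) = (2πt)^{−1/2} exp(−x²/(2t))`. -/
def gauss1 (t x : ℝ) : ℝ :=
  (2 * Real.pi * t) ^ (-(1 : ℝ) / 2) * Real.exp (-x ^ 2 / (2 * t))

lemma lint_rpow_aux (p q β : ℝ) (hpq : p < q) (hβ : 0 < β) :
    ∫⁻ y in Set.Ioo p q, ENNReal.ofReal (β * (y - p) ^ (β - 1)) =
      ENNReal.ofReal ((q - p) ^ β) := by
  rw [MeasureTheory.restrict_Ioo_eq_restrict_Ioc]
  have hint : IntervalIntegrable (fun y : ℝ => β * (y - p) ^ (β - 1)) volume p q := by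
    have h1 : IntervalIntegrable (fun x : ℝ => x ^ (β - 1)) volume 0 (q - p) :=
      intervalIntegral.intervalIntegrable_rpow' (by linarith)
    have h2 := (h1.comp_sub_right p).const_mul β
    simpa using h2
  have hIoc : IntegrableOn (fun y : ℝ => β * (y - p) ^ (β - 1)) (Set.Ioc p q) volume :=
    (intervalIntegrable_iff_integrableOn_Ioc_of_le hpq.le).mp hint
  rw [← ofReal_integral_eq_lintegral_ofReal hIoc ?_]
  · congr 1
    have : (∫ y in Set.Ioc p q, β * (y - p) ^ (β - 1)) =
        ∫ y in p..q, β * (y - p) ^ (β - 1) := by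
      rw [intervalIntegral.integral_of_le hpq.le]
    rw [this, intervalIntegral.integral_const_mul]
    have hc : (∫ y in p..q, (y - p) ^ (β - 1)) = ∫ x in p - p..q - p, x ^ (β - 1) :=
      intervalIntegral.integral_comp_sub_right (fun x => x ^ (β - 1)) p
    rw [hc, sub_self]
    rw [integral_rpow (Or.inl (by linarith))]
    rw [Real.zero_rpow (by linarith : β - 1 + 1 ≠ 0)]
    have hβ0 : β - 1 + 1 = β := by ring
    rw [hβ0]
    field_simp
    rw [sub_zero]
  · filter_upwards [ae_restrict_mem measurableSet_Ioc] with y hy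
    have : 0 < y - p := by simp at hy; linarith [hy.1]
    positivity

theorem statement13 (β : ℝ) (hβ : β ∈ Set.Ioc (0 : ℝ) 1) (a : ℕ → ℝ)
    (ha : StrictMono a) (hbdd : ∃ M, ∀ n, a n ≤ M)
    (hdiv : (∑' n : ℕ, ENNReal.ofReal ((a (n + 1) - a n) ^ β)) = ⊤)
    (h : ℝ → ℝ≥0∞)
    (hh1 : ∀ n : ℕ, ∀ y ∈ Set.Ioo (a n) ((a n + a (n + 1)) / 2),
      h y = ENNReal.ofReal (β * (y - a n) ^ (β - 1)))
    (hh2 : ∀ n : ℕ, ∀ y ∈ Set.Ioo ((a n + a (n + 1)) / 2) (a (n + 1)),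
      h y = ENNReal.ofReal (β * (a (n + 1) - y) ^ (β - 1)))
    (hh3 : ∀ y : ℝ,
      (∀ n : ℕ, y ∉ Set.Ioo (a n) ((a n + a (n + 1)) / 2) ∧
        y ∉ Set.Ioo ((a n + a (n + 1)) / 2) (a (n + 1))) → h y = 0) :
    ∀ τ : ℝ, 0 < τ → ∀ θ : ℝ,
      (∫⁻ y : ℝ, h y * ENNReal.ofReal (gauss1 τ (y - θ))) = ⊤ := by
  obtain ⟨hβ0, hβ1⟩ := hβ
  intro τ hτ θ
  obtain ⟨M, hM⟩ := hbdd
  -- lower bound on the Gaussian on [a 0, M]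
  set K : ℝ := max |a 0| |M| + |θ| with hK
  set c : ℝ := (2 * Real.pi * τ) ^ (-(1 : ℝ) / 2) * Real.exp (-K ^ 2 / (2 * τ)) with hc
  have hπ : (0 : ℝ) < 2 * Real.pi * τ := by positivity
  have hcpos : 0 < c := by positivity
  have hgauss : ∀ y : ℝ, a 0 ≤ y → y ≤ M → c ≤ gauss1 τ (y - θ) := by
    intro y h1 h2
    have habs : |y - θ| ≤ K := by
      have h3 : |y| ≤ max |a 0| |M| := by
        rcases le_total 0 y with hy | hy
        · rw [abs_of_nonneg hy]
          exact le_trans (le_trans h2 (le_abs_self M)) (le_max_right _ _)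
        · rw [abs_of_nonpos hy]
          exact le_trans (le_trans (neg_le_neg h1) (neg_le_abs (a 0))) (le_max_left _ _)
      calc |y - θ| ≤ |y| + |θ| := abs_sub _ _
        _ ≤ K := by rw [hK]; linarith
    have hsq : (y - θ) ^ 2 ≤ K ^ 2 := by
      rw [← sq_abs (y - θ), ← sq_abs K]
      exact pow_le_pow_left₀ (abs_nonneg _) (le_trans habs (le_abs_self K)) 2
    unfold gauss1
    apply mul_le_mul_of_nonneg_left _ (le_of_lt (Real.rpow_pos_of_pos hπ _))
    apply Real.exp_le_exp.mpr
    have h2τ : (0 : ℝ) < 2 * τ := by positivity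
    rw [div_le_div_iff₀ h2τ h2τ]
    nlinarith
  -- the disjoint left-half intervals
  set S : ℕ → Set ℝ := fun n => Set.Ioo (a n) ((a n + a (n + 1)) / 2) with hS
  have hmeas : ∀ n, MeasurableSet (S n) := fun n => measurableSet_Ioo
  have hsub : ∀ n, S n ⊆ Set.Ioo (a n) (a (n + 1)) := by
    intro n y hy
    have hlt : a n < a (n + 1) := ha (Nat.lt_succ_self n)
    simp only [hS, Set.mem_Ioo] at hy ⊢
    exact ⟨hy.1, by linarith [hy.2]⟩
  have hdisj : Pairwise (Function.onFun Disjoint S) := by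
    intro m n hmn
    apply Set.disjoint_left.mpr
    intro x hxm hxn
    rcases lt_or_gt_of_ne hmn with hlt | hlt
    · have h1 : a (m + 1) ≤ a n := ha.monotone hlt
      have := (hsub m hxm).2
      have := (hsub n hxn).1
      linarith
    · have h1 : a (n + 1) ≤ a m := ha.monotone hlt
      have := (hsub n hxn).2
      have := (hsub m hxm).1
      linarith
  -- lower bound on each piece
  have hpiece : ∀ n : ℕ,
      ENNReal.ofReal c * ENNReal.ofReal (((a (n + 1) - a n) / 2) ^ β) ≤
        ∫⁻ y in S n, h y * ENNReal.ofReal (gauss1 τ (y - θ)) := by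
    intro n
    have hlt : a n < a (n + 1) := ha (Nat.lt_succ_self n)
    have hmid : a n < (a n + a (n + 1)) / 2 := by linarith
    calc ENNReal.ofReal c * ENNReal.ofReal (((a (n + 1) - a n) / 2) ^ β)
        = ENNReal.ofReal c * ENNReal.ofReal (((a n + a (n + 1)) / 2 - a n) ^ β) := by
          congr 2; ring_nf
      _ = ENNReal.ofReal c *
            ∫⁻ y in S n, ENNReal.ofReal (β * (y - a n) ^ (β - 1)) := by
          rw [lint_rpow_aux (a n) ((a n + a (n + 1)) / 2) β hmid hβ0]
      _ = ∫⁻ y in S n, ENNReal.ofReal (β * (y - a n) ^ (β - 1)) * ENNReal.ofReal c := by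
          rw [lintegral_mul_const'' _ (by fun_prop), mul_comm]
      _ ≤ ∫⁻ y in S n, h y * ENNReal.ofReal (gauss1 τ (y - θ)) := by
          apply setLIntegral_mono' (hmeas n)
          intro y hy
          rw [hh1 n y hy]
          apply mul_le_mul_right
          apply ENNReal.ofReal_le_ofReal
          have hy' := hsub n hy
          have h1 : a 0 ≤ y := le_of_lt (lt_of_le_of_lt (ha.monotone (Nat.zero_le n)) hy'.1)
          have h2 : y ≤ M := le_of_lt (lt_of_lt_of_le hy'.2 (hM (n + 1)))
          exact hgauss y h1 h2
  -- the sum diverges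
  have hsum : (∑' n : ℕ, ENNReal.ofReal c *
      ENNReal.ofReal (((a (n + 1) - a n) / 2) ^ β)) = ⊤ := by
    have hterm : ∀ n : ℕ, ENNReal.ofReal (c / 2) * ENNReal.ofReal ((a (n + 1) - a n) ^ β) ≤
        ENNReal.ofReal c * ENNReal.ofReal (((a (n + 1) - a n) / 2) ^ β) := by
      intro n
      have hlt : a n < a (n + 1) := ha (Nat.lt_succ_self n)
      have hl0 : (0 : ℝ) ≤ a (n + 1) - a n := by linarith
      rw [← ENNReal.ofReal_mul (by linarith), ← ENNReal.ofReal_mul (by linarith)]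
      apply ENNReal.ofReal_le_ofReal
      have hdiv2 : ((a (n + 1) - a n) / 2) ^ β = (a (n + 1) - a n) ^ β / 2 ^ β :=
        Real.div_rpow hl0 (by norm_num : (0:ℝ) ≤ 2) β
      rw [hdiv2]
      have h2β : (2 : ℝ) ^ β ≤ 2 := by
        calc (2 : ℝ) ^ β ≤ (2 : ℝ) ^ (1 : ℝ) :=
            Real.rpow_le_rpow_of_exponent_le (by norm_num) hβ1
          _ = 2 := Real.rpow_one 2
      have h2β0 : (0 : ℝ) < (2 : ℝ) ^ β := Real.rpow_pos_of_pos (by norm_num) β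
      have hx : (0 : ℝ) ≤ (a (n + 1) - a n) ^ β := Real.rpow_nonneg hl0 β
      rw [div_mul_eq_mul_div, mul_div_assoc]
      apply mul_le_mul_of_nonneg_left _ (le_of_lt hcpos)
      exact div_le_div_of_nonneg_left hx h2β0 h2β
    refine top_le_iff.mp ?_
    calc (⊤ : ℝ≥0∞) = ENNReal.ofReal (c / 2) * ∑' n, ENNReal.ofReal ((a (n + 1) - a n) ^ β) := by
          rw [hdiv, ENNReal.mul_top (by simp [ENNReal.ofReal_eq_zero]; linarith)]
      _ = ∑' n, ENNReal.ofReal (c / 2) * ENNReal.ofReal ((a (n + 1) - a n) ^ β) :=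
          (ENNReal.tsum_mul_left).symm
      _ ≤ _ := ENNReal.tsum_le_tsum hterm
  refine top_le_iff.mp ?_
  calc (⊤ : ℝ≥0∞) = ∑' n : ℕ, ENNReal.ofReal c *
        ENNReal.ofReal (((a (n + 1) - a n) / 2) ^ β) := hsum.symm
    _ ≤ ∑' n : ℕ, ∫⁻ y in S n, h y * ENNReal.ofReal (gauss1 τ (y - θ)) :=
        ENNReal.tsum_le_tsum hpiece
    _ = ∫⁻ y in ⋃ n, S n, h y * ENNReal.ofReal (gauss1 τ (y - θ)) :=
        (lintegral_iUnion hmeas hdisj _).symm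
    _ ≤ ∫⁻ y : ℝ, h y * ENNReal.ofReal (gauss1 τ (y - θ)) := setLIntegral_le_lintegral _ _

end
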